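/- If G is a finite simple graph of order n and size m without isolated vertices, then the restrained double domination number satisfies γ_{2r}(G) ≥ (5n − 2m)/4. -/
import Mathlib


open Finset

/-- A set `S` of vertices is a `(k,k',k'')`-dominating set if every vertex in `S` has at
least `k` neighbors in `S`, and every vertex not in `S` has at least `k'` neighbors in `S`
and at least `k''` neighbors outside `S`. -/
def SimpleGraph.IsKkkDomSet {V : Type*} [Fintype V] [DecidableEq V] (G : SimpleGraph V)
    [DecidableRel G.Adj] (k k' k'' : ℕ) (S : Finset V) : Prop :=
  (∀ v ∈ S, k ≤ (G.neighborFinset v ∩ S).card) ∧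
  (∀ v ∉ S, k' ≤ (G.neighborFinset v ∩ S).card ∧ k'' ≤ (G.neighborFinset v \ S).card)

/-- The `(k,k',k'')`-domination number: the minimum cardinality of a
`(k,k',k'')`-dominating set. -/
noncomputable def SimpleGraph.kkkDomNum {V : Type*} [Fintype V] [DecidableEq V]
    (G : SimpleGraph V) [DecidableRel G.Adj] (k k' k'' : ℕ) : ℕ :=
  sInf {n | ∃ S : Finset V, G.IsKkkDomSet k k' k'' S ∧ S.card = n}

lemma cross_count {V : Type*} [Fintype V] [DecidableEq V] (G : SimpleGraph V)
    [DecidableRel G.Adj] (S : Finset V) :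
    ∑ v ∈ S, (G.neighborFinset v \ S).card = ∑ v ∈ Sᶜ, (G.neighborFinset v ∩ S).card := by
  have h1 : ∀ v, G.neighborFinset v \ S = Sᶜ.filter (G.Adj v) := by
    intro v; ext u
    simp [SimpleGraph.mem_neighborFinset, and_comm]
  have h2 : ∀ v, G.neighborFinset v ∩ S = S.filter (G.Adj v) := by
    intro v; ext u
    simp [SimpleGraph.mem_neighborFinset, and_comm]
  simp only [h1, h2, Finset.card_filter]
  rw [Finset.sum_comm]
  congr 1; ext u; congr 1; ext v
  simp [G.adj_comm]

lemma key_bound {V : Type*} [Fintype V] [DecidableEq V] (G : SimpleGraph V)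
    [DecidableRel G.Adj] (S : Finset V) (hS : G.IsKkkDomSet 1 2 1 S) :
    5 * Fintype.card V ≤ 2 * G.edgeFinset.card + 4 * S.card := by
  obtain ⟨hin, hout⟩ := hS
  have hdeg : ∀ v, G.degree v = (G.neighborFinset v ∩ S).card + (G.neighborFinset v \ S).card := by
    intro v
    rw [SimpleGraph.degree, ← Finset.card_inter_add_card_sdiff (G.neighborFinset v) S]
  have hsum : ∑ v, G.degree v = 2 * G.edgeFinset.card :=
    G.sum_degrees_eq_twice_card_edges
  have hsplit : ∑ v, G.degree v = ∑ v ∈ S, G.degree v + ∑ v ∈ Sᶜ, G.degree v := by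
    rw [← Finset.sum_add_sum_compl S]
  have hinS : S.card + ∑ v ∈ Sᶜ, (G.neighborFinset v ∩ S).card ≤ ∑ v ∈ S, G.degree v := by
    calc S.card + ∑ v ∈ Sᶜ, (G.neighborFinset v ∩ S).card
        = ∑ v ∈ S, 1 + ∑ v ∈ S, (G.neighborFinset v \ S).card := by
          rw [Finset.sum_const, smul_eq_mul, mul_one, cross_count]
      _ = ∑ v ∈ S, (1 + (G.neighborFinset v \ S).card) := by rw [Finset.sum_add_distrib]
      _ ≤ ∑ v ∈ S, G.degree v := by
          apply Finset.sum_le_sum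
          intro v hv
          rw [hdeg v]
          exact Nat.add_le_add (hin v hv) le_rfl
  have houtS : ∀ v ∈ Sᶜ, 3 ≤ G.degree v := by
    intro v hv
    rw [Finset.mem_compl] at hv
    obtain ⟨h1, h2⟩ := hout v hv
    rw [hdeg v]
    omega
  have hcross : ∀ v ∈ Sᶜ, 2 ≤ (G.neighborFinset v ∩ S).card := fun v hv =>
    (hout v (Finset.mem_compl.mp hv)).1
  have hA : 2 * Sᶜ.card ≤ ∑ v ∈ Sᶜ, (G.neighborFinset v ∩ S).card := by
    calc 2 * Sᶜ.card = ∑ v ∈ Sᶜ, 2 := by rw [Finset.sum_const, smul_eq_mul, mul_comm]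
      _ ≤ _ := Finset.sum_le_sum hcross
  have hB : 3 * Sᶜ.card ≤ ∑ v ∈ Sᶜ, G.degree v := by
    calc 3 * Sᶜ.card = ∑ v ∈ Sᶜ, 3 := by rw [Finset.sum_const, smul_eq_mul, mul_comm]
      _ ≤ _ := Finset.sum_le_sum houtS
  have hcards : S.card + Sᶜ.card = Fintype.card V := Finset.card_add_card_compl S
  omega

/-- If G has no isolated vertices, then γ_{2r}(G) = γ_{(1,2,1)}(G) ≥ (5n − 2m)/4. -/
theorem stmt_18 {V : Type*} [Fintype V] [DecidableEq V] (G : SimpleGraph V)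
    [DecidableRel G.Adj] (h : ∀ v : V, 0 < G.degree v) :
    (5 * (Fintype.card V : ℝ) - 2 * G.edgeFinset.card) / 4 ≤ G.kkkDomNum 1 2 1 := by
  have hne : (Finset.univ : Finset V).card ∈
      {n | ∃ S : Finset V, G.IsKkkDomSet 1 2 1 S ∧ S.card = n} := by
    refine ⟨Finset.univ, ⟨?_, ?_⟩, rfl⟩
    · intro v _
      rw [Finset.inter_univ]
      exact h v
    · intro v hv
      exact absurd (Finset.mem_univ v) hv
  obtain ⟨S, hS, hcard⟩ := Nat.sInf_mem ⟨_, hne⟩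
  have hbound := key_bound G S hS
  rw [SimpleGraph.kkkDomNum, ← hcard] at *
  rw [div_le_iff₀ (by norm_num : (0:ℝ) < 4)]
  have : (5 * Fintype.card V : ℝ) ≤ 2 * G.edgeFinset.card + 4 * S.card := by
    exact_mod_cast hbound
  linarith
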